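/- arXiv:2310.13035 — 3 statements merged into one kernel-verified Lean document; each statement's English description precedes it below -/
import Mathlib

section
/- Let n ≥ 1 and define m_i, k_i, Y_i, Z_i from n by the Gr3 recurrence. Then the Collatz orbit of n reaches 1 if and only if there exists a natural number x such that n · 3^x + Y_x = 2^(Z_x) (equivalently, m_x = 1). -/
/-- The Collatz step. -/
def collatz (m : ℕ) : ℕ := if m % 2 = 0 then m / 2 else 3 * m + 1


lemma collatz_iter_mul_pow (a k : ℕ) : collatz^[k] (a * 2 ^ k) = a := by
  induction k with
  | zero => simp
  | succ k ih =>
    have h1 : collatz (a * 2 ^ (k + 1)) = a * 2 ^ k := by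
      have h2 : a * 2 ^ (k + 1) = (a * 2 ^ k) * 2 := by ring
      rw [h2]
      simp [collatz, Nat.mul_mod_left, Nat.mul_div_cancel]
    rw [Function.iterate_succ_apply, h1, ih]

lemma collatz_odd {a : ℕ} (ha : ¬ 2 ∣ a) : collatz a = 3 * a + 1 := by
  simp [collatz, Nat.two_dvd_ne_zero.mp ha]

lemma pow_padic_mul_div (a : ℕ) (ha : a ≠ 0) :
    2 ^ padicValNat 2 a * (a / 2 ^ padicValNat 2 a) = a := by
  rw [← Nat.factorization_def a Nat.prime_two]
  exact Nat.ordProj_mul_ordCompl_eq_self a 2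

lemma not_dvd_div_padic (a : ℕ) (ha : a ≠ 0) :
    ¬ 2 ∣ (a / 2 ^ padicValNat 2 a) := by
  rw [← Nat.factorization_def a Nat.prime_two]
  exact Nat.not_dvd_ordCompl Nat.prime_two ha

lemma iter_one (d : ℕ) : collatz^[d] 1 = 1 ∨ collatz^[d] 1 = 4 ∨ collatz^[d] 1 = 2 := by
  induction d with
  | zero => simp
  | succ d ih =>
    rw [Function.iterate_succ_apply']
    rcases ih with h | h | h <;> rw [h] <;> simp [collatz]

theorem stmt7 (n : ℕ) (hn : 1 ≤ n) (m k Y Z : ℕ → ℕ)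
    (hk0 : k 0 = padicValNat 2 n)
    (hm0 : m 0 = n / 2 ^ (k 0))
    (hk : ∀ i, k (i + 1) = padicValNat 2 (3 * m i + 1))
    (hm : ∀ i, m (i + 1) = (3 * m i + 1) / 2 ^ (k (i + 1)))
    (hZ : ∀ i, Z i = ∑ j ∈ Finset.range (i + 1), k j)
    (hY0 : Y 0 = 0)
    (hY : ∀ i, Y (i + 1) = 3 * Y i + 2 ^ (Z i)) :
    (∃ i, collatz^[i] n = 1) ↔ (∃ x, n * 3 ^ x + Y x = 2 ^ (Z x)) := by
  have hn0 : n ≠ 0 := by omega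
  -- each m i is odd
  have hmodd : ∀ i, ¬ 2 ∣ m i := by
    intro i
    cases i with
    | zero => rw [hm0, hk0]; exact not_dvd_div_padic n hn0
    | succ i => rw [hm i, hk i]; exact not_dvd_div_padic _ (by omega)
  -- decomposition facts
  have hsplit0 : m 0 * 2 ^ k 0 = n := by
    rw [hm0, hk0, mul_comm]; exact pow_padic_mul_div n hn0
  have hsplit : ∀ i, m (i + 1) * 2 ^ k (i + 1) = 3 * m i + 1 := by
    intro i
    rw [hm i, hk i, mul_comm]; exact pow_padic_mul_div _ (by omega)
  have hZ0 : Z 0 = k 0 := by rw [hZ 0]; simp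
  have hZs : ∀ i, Z (i + 1) = Z i + k (i + 1) := by
    intro i
    rw [hZ i, hZ (i + 1), Finset.sum_range_succ]
  -- the invariant
  have hinv : ∀ i, n * 3 ^ i + Y i = m i * 2 ^ (Z i) := by
    intro i
    induction i with
    | zero => rw [hY0, hZ0]; simp [← hsplit0]
    | succ i ih =>
      have : n * 3 ^ (i + 1) + Y (i + 1) = 3 * (n * 3 ^ i + Y i) + 2 ^ (Z i) := by
        rw [hY i]; ring
      rw [this, ih, hZs i, pow_add]
      have h := hsplit i
      calc 3 * (m i * 2 ^ Z i) + 2 ^ Z i = (3 * m i + 1) * 2 ^ Z i := by ring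
        _ = m (i + 1) * 2 ^ k (i + 1) * 2 ^ Z i := by rw [h]
        _ = m (i + 1) * (2 ^ Z i * 2 ^ k (i + 1)) := by ring
  -- reaching m i
  have hreach : ∀ i, collatz^[Z i + i] n = m i := by
    intro i
    induction i with
    | zero => rw [hZ0, ← hsplit0]; simpa using collatz_iter_mul_pow (m 0) (k 0)
    | succ i ih =>
      have hcount : Z (i + 1) + (i + 1) = (k (i + 1) + 1) + (Z i + i) := by
        rw [hZs i]; ring
      rw [hcount, Function.iterate_add_apply, ih, Function.iterate_succ_apply,
        collatz_odd (hmodd i), ← hsplit i, collatz_iter_mul_pow]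
  constructor
  · rintro ⟨N, hN⟩
    refine ⟨N, ?_⟩
    have hmN : m N = 1 := by
      have h1 : collatz^[Z N + N] n = collatz^[Z N] 1 := by
        rw [Function.iterate_add_apply, hN]
      have h2 := hreach N
      rcases iter_one (Z N) with h | h | h <;>
        [skip; (exfalso; exact hmodd N (by omega)); (exfalso; exact hmodd N (by omega))]
      · omega
    have := hinv N
    rw [hmN] at this
    omega
  · rintro ⟨x, hx⟩
    refine ⟨Z x + x, ?_⟩
    have hmx : m x = 1 := by
      have := hinv x
      rw [hx] at this
      have h2 : 0 < 2 ^ (Z x) := by positivity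
      nlinarith [this]
    rw [hreach x, hmx]
end

section
/- In the Jaśkowski structure J = { (k, w) ∈ ℤ × ℚ : w ≥ 0 ∧ (w = 0 → k ≥ 0) } with componentwise addition, for every x ∈ J there exists y ∈ J such that x = y + y or x = y + y + (1,0); more generally, for every m ≥ 1 and every x ∈ J there exist y ∈ J and r < m with x = m·y + r·(1,0). -/
/-- The Jaśkowski structure: pairs `(k, w)` with `k : ℤ`, `w : ℚ`, `w ≥ 0`,
and `k ≥ 0` whenever `w = 0`. -/
def J : Type := { p : ℤ × ℚ // 0 ≤ p.2 ∧ (p.2 = 0 → 0 ≤ p.1) }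

/-- Componentwise addition on `J`. -/
def jadd (a b : J) : J :=
  ⟨(a.1.1 + b.1.1, a.1.2 + b.1.2), by
    obtain ⟨ha1, ha2⟩ := a.2
    obtain ⟨hb1, hb2⟩ := b.2
    refine ⟨add_nonneg ha1 hb1, fun h => ?_⟩
    simp only [] at h
    have h' : a.1.2 + b.1.2 = 0 := h
    have hA : a.1.2 = 0 := by linarith
    have hB : b.1.2 = 0 := by linarith
    exact add_nonneg (ha2 hA) (hb2 hB)⟩

/-- The zero of `J`. -/
def jzero : J := ⟨(0, 0), by norm_num⟩

/-- The one of `J`. -/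
def jone : J := ⟨(1, 0), by norm_num⟩

/-- `m`-fold sum of an element of `J`. -/
def jsmul : ℕ → J → J
  | 0, _ => jzero
  | m + 1, x => jadd x (jsmul m x)

lemma jsmul_val (n : ℕ) (y : J) : (jsmul n y).1 = ((n : ℤ) * y.1.1, (n : ℚ) * y.1.2) := by
  induction n with
  | zero => simp [jsmul, jzero]
  | succ k ih =>
    simp only [jsmul, jadd, ih]
    push_cast
    exact Prod.ext (by ring) (by ring)

lemma key : ∀ m : ℕ, 1 ≤ m → ∀ x : J, ∃ (y : J) (r : ℕ), r < m ∧
      x = jadd (jsmul m y) (jsmul r jone) := by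
  intro m hm x
  obtain ⟨⟨k, w⟩, hw, hk⟩ := x
  have hm0 : (0 : ℤ) < (m : ℤ) := by exact_mod_cast hm
  have hmod : 0 ≤ k % (m : ℤ) := Int.emod_nonneg k (by omega)
  refine ⟨⟨(k / (m : ℤ), w / (m : ℚ)), ?_⟩, (k % (m : ℤ)).toNat, ?_, ?_⟩
  · refine ⟨by positivity, fun h => ?_⟩
    have : w = 0 := by
      rw [div_eq_zero_iff] at h
      rcases h with h | h
      · exact h
      · exfalso; exact absurd h (by exact_mod_cast (by omega : (m : ℤ) ≠ 0))
    have hk0 := hk this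
    exact Int.ediv_nonneg hk0 (le_of_lt hm0)
  · have := Int.emod_lt_of_pos k hm0
    omega
  · apply Subtype.ext
    simp only [jadd, jsmul_val, jone]
    erw [jsmul_val, jsmul_val]
    have h1 : (m : ℤ) * (k / (m : ℤ)) + k % (m : ℤ) = k := Int.mul_ediv_add_emod k m
    have h2 : (((k % (m : ℤ)).toNat : ℤ)) = k % (m : ℤ) := Int.toNat_of_nonneg hmod
    have hm0' : (m : ℚ) ≠ 0 := by exact_mod_cast (by omega : (m : ℤ) ≠ 0)
    refine Prod.ext ?_ ?_
    · simp only []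
      rw [h2]; linarith [h1]
    · simp only []
      field_simp
      simp

theorem stmt13 :
    (∀ x : J, ∃ y : J, x = jadd y y ∨ x = jadd (jadd y y) jone) ∧
    (∀ m : ℕ, 1 ≤ m → ∀ x : J, ∃ (y : J) (r : ℕ), r < m ∧
      x = jadd (jsmul m y) (jsmul r jone)) := by
  refine ⟨?_, key⟩
  intro x
  obtain ⟨y, r, hr, hx⟩ := key 2 (by norm_num) x
  refine ⟨y, ?_⟩
  interval_cases r
  · left
    rw [hx]
    apply Subtype.ext
    simp only [jadd, jsmul, jzero]
    refine Prod.ext ?_ ?_ <;> simp <;> ring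
  · right
    rw [hx]
    apply Subtype.ext
    simp only [jadd, jsmul, jzero, jone]
    refine Prod.ext ?_ ?_ <;> simp <;> ring
end

section
/- Define on J = { (k, w) ∈ ℤ × ℚ : w ≥ 0 ∧ (w = 0 → k ≥ 0) } the order x < y iff there exists z ∈ J with z ≠ (0,0) and x + z = y. Then every reachable element (n, 0), n ∈ ℕ, is strictly less than every unreachable element (k, w) with w > 0; and the set of unreachable elements has no minimum with respect to this order. -/
/-- The order on J: x < y iff some nonzero z satisfies x + z = y. -/
def jlt (x y : J) : Prop := ∃ z : J, z ≠ jzero ∧ jadd x z = y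

lemma jsmul_one (n : ℕ) : jsmul n jone = ⟨(n, 0), by norm_num⟩ := by
  induction n with
  | zero => rfl
  | succ m ih =>
    show jadd jone (jsmul m jone) = _
    rw [ih]
    apply Subtype.ext
    simp [jadd, jone]
    ring

theorem stmt15 :
    (∀ (n : ℕ) (a : J), 0 < a.1.2 → jlt (jsmul n jone) a) ∧
    ¬ ∃ a : J, 0 < a.1.2 ∧ ∀ b : J, 0 < b.1.2 → a = b ∨ jlt a b := by
  constructor
  · intro n a ha
    refine ⟨⟨(a.1.1 - n, a.1.2), ⟨le_of_lt ha, fun h => absurd h (ne_of_gt ha)⟩⟩, ?_, ?_⟩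
    · intro h
      have := congrArg (fun x : J => x.1.2) h
      simp [jzero] at this
      exact absurd this (ne_of_gt ha)
    · rw [jsmul_one]
      apply Subtype.ext
      simp [jadd]
  · rintro ⟨a, ha, h⟩
    set b : J := ⟨(a.1.1, a.1.2 / 2), ⟨by positivity, fun h' => absurd h' (by positivity)⟩⟩ with hb
    have hb2 : 0 < b.1.2 := by simp [hb]; linarith
    rcases h b hb2 with heq | ⟨z, hz, hzeq⟩
    · have := congrArg (fun x : J => x.1.2) heq
      simp [hb] at this
      linarith
    · have := congrArg (fun x : J => x.1.2) hzeq
      simp [jadd, hb] at this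
      have hz2 := z.2.1
      linarith
end
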